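/- (Theorem 1, case i=3, finite-group version.) For all (x,u,y,v,z) ∈ A⁵ one has (1/|A|) · ∑_{x′,u′,z′ ∈ A} S(x,x′) · conj(S(u,u′)) · T(z,z′) · D(x′,u′,v,y,z′) = conj(D(x,u,y,v,z)), where conj denotes complex conjugation and |A| is the cardinality of A. -/

import Mathlib

open Finset

/-- Theorem 1, case `i = 3`, finite-group version: P-symmetry relation
`(S ⊗ S⁻¹ ⊗ σ ⊗ T) D = conj D` written out in coordinates. -/
theorem pachner_P_symmetry_case_three
    {A : Type*} [AddCommGroup A] [Fintype A] [DecidableEq A]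
    (g : A → ℂ) (hg_abs : ∀ x, ‖g x‖ = 1) (hg_sym : ∀ x, g (-x) = g x)
    (χ : A → A → ℂ) (hχ : ∀ x y, χ x y = g x * g y * (g (x + y))⁻¹)
    (hχ_add : ∀ x x' y, χ (x + x') y = χ x y * χ x' y)
    (hχ_nondeg : ∀ x : A, x ≠ 0 → ∃ y : A, χ x y ≠ 1)
    (δ : A → ℂ) (hδ : ∀ a, δ a = if a = 0 then 1 else 0)
    (D : A → A → A → A → A → ℂ)
    (hD : ∀ x u y v z, D x u y v z = χ x z * δ (x - u + y) * δ (y - v + z))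
    (T : A → A → ℂ) (hT : ∀ x y, T x y = δ (x + y) * g x)
    (S : A → A → ℂ) (hS : ∀ x y, S x y = g (x - y)) :
    ∀ x u y v z : A,
      (Fintype.card A : ℂ)⁻¹ *
          ∑ x' : A, ∑ u' : A, ∑ z' : A,
            S x x' * (starRingEnd ℂ) (S u u') * T z z' * D x' u' v y z'
        = (starRingEnd ℂ) (D x u y v z) := by
  -- basic facts
  have hgne : ∀ t : A, g t ≠ 0 := by
    intro t h
    have h2 := hg_abs t
    rw [h] at h2; simp at h2
  have hχ00 : χ 0 0 = g 0 := by rw [hχ, add_zero, mul_assoc, mul_inv_cancel₀ (hgne 0), mul_one]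
  have hg0 : g 0 = 1 := by
    have h := hχ_add 0 0 0
    rw [add_zero, hχ00] at h
    nth_rewrite 1 [← mul_one (g 0)] at h
    exact (mul_left_cancel₀ (hgne 0) h).symm
  have hχ0l : ∀ t : A, χ 0 t = 1 := by
    intro t
    have h := hχ_add 0 0 t
    rw [add_zero] at h
    have hne : χ 0 t ≠ 0 := by rw [hχ]; exact mul_ne_zero (mul_ne_zero (hgne _) (hgne _)) (inv_ne_zero (hgne _))
    nth_rewrite 1 [← mul_one (χ 0 t)] at h
    exact (mul_left_cancel₀ hne h).symm
  have hχ_symm : ∀ s t : A, χ s t = χ t s := by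
    intro s t; rw [hχ, hχ, add_comm]; ring
  have hχ0r : ∀ t : A, χ t 0 = 1 := fun t => by rw [hχ_symm, hχ0l]
  have hχne : ∀ s t : A, χ s t ≠ 0 := by
    intro s t; rw [hχ]
    exact mul_ne_zero (mul_ne_zero (hgne _) (hgne _)) (inv_ne_zero (hgne _))
  have hχ_addr : ∀ s t t' : A, χ s (t + t') = χ s t * χ s t' := by
    intro s t t'
    rw [hχ_symm, hχ_add, hχ_symm t, hχ_symm t']
  have hχ_negl : ∀ s t : A, χ (-s) t = (χ s t)⁻¹ := by
    intro s t
    have h := hχ_add s (-s) t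
    rw [add_neg_cancel, hχ0l] at h
    exact eq_inv_of_mul_eq_one_left (by rw [mul_comm]; exact h.symm)
  have hχ_negr : ∀ s t : A, χ s (-t) = (χ s t)⁻¹ := by
    intro s t
    rw [hχ_symm, hχ_negl, hχ_symm]
  have hconj : ∀ w : ℂ, ‖w‖ = 1 → (starRingEnd ℂ) w = w⁻¹ := by
    intro w hw
    have h1 : (starRingEnd ℂ) w * w = 1 := by
      rw [mul_comm, Complex.mul_conj]
      norm_cast
      rw [← Complex.sq_norm, hw]; norm_num
    exact eq_inv_of_mul_eq_one_left h1
  have hχ_abs : ∀ s t : A, ‖χ s t‖ = 1 := by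
    intro s t
    rw [hχ, norm_mul, norm_mul, norm_inv, hg_abs, hg_abs, hg_abs]
    norm_num
  -- orthogonality
  have hsum : ∀ a : A, (∑ w : A, χ w a) = if a = 0 then (Fintype.card A : ℂ) else 0 := by
    intro a
    by_cases ha : a = 0
    · subst ha; simp [hχ0r]
    · rw [if_neg ha]
      obtain ⟨y₀, hy₀⟩ := hχ_nondeg a ha
      have hy₀' : χ y₀ a ≠ 1 := by rw [hχ_symm]; exact hy₀
      have hshift : (∑ w : A, χ w a) = χ y₀ a * ∑ w : A, χ w a := by
        rw [Finset.mul_sum]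
        exact Fintype.sum_equiv (Equiv.addLeft (-y₀)) _ _
          (fun w => by rw [Equiv.coe_addLeft, ← hχ_add, show y₀ + (-y₀ + w) = w by abel])
      have h2 : (χ y₀ a - 1) * ∑ w : A, χ w a = 0 := by
        rw [sub_mul, one_mul, ← hshift, sub_self]
      rcases mul_eq_zero.mp h2 with h | h
      · exact absurd (sub_eq_zero.mp h) hy₀'
      · exact h
  intro x u y v z
  have hδne : ∀ t : A, t ≠ 0 → δ t = 0 := fun t ht => by rw [hδ, if_neg ht]
  -- collapse the two inner sums
  have step1 : ∀ x' : A, (∑ u' : A, ∑ z' : A,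
      S x x' * (starRingEnd ℂ) (S u u') * T z z' * D x' u' v y z')
      = g (x - x') * (g (u - (x' + v)))⁻¹ * g z * χ x' (-z) *
          (if v - y + -z = 0 then 1 else 0) := by
    intro x'
    have inner : ∀ u' : A, (∑ z' : A,
        S x x' * (starRingEnd ℂ) (S u u') * T z z' * D x' u' v y z')
        = S x x' * (starRingEnd ℂ) (S u u') * g z * χ x' (-z) *
            ((if x' - u' + v = 0 then 1 else 0) * (if v - y + -z = 0 then 1 else 0)) := by
      intro u'
      rw [Fintype.sum_eq_single (-z)]
      · rw [hT, hD, hδ (z + -z), hδ (x' - u' + v), hδ (v - y + -z)]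
        simp only [add_neg_cancel, if_pos rfl, if_true]
        ring
      · intro b hb
        have hzb : z + b ≠ 0 := fun h => hb (by rw [← neg_eq_of_add_eq_zero_right h])
        rw [hT, hδ (z + b), if_neg hzb]
        ring
    rw [Finset.sum_congr rfl (fun u' _ => inner u')]
    rw [Fintype.sum_eq_single (x' + v)]
    · rw [if_pos (show x' - (x' + v) + v = 0 by abel), hS, hS]
      rw [hconj _ (hg_abs _)]
      ring
    · intro b hb
      have hbne : x' - b + v ≠ 0 := by
        intro h
        apply hb
        rw [← sub_eq_zero]
        have e : b - (x' + v) = -(x' - b + v) := by abel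
        rw [e, h, neg_zero]
      rw [if_neg hbne]
      ring
  rw [Finset.sum_congr rfl (fun x' _ => step1 x')]
  by_cases hc : v - y + -z = 0
  · -- main case: v = y + z
    have hv : v = y + z := by
      rw [← sub_eq_zero]
      have e : v - (y + z) = v - y + -z := by abel
      rw [e, hc]
    subst hv
    simp only [if_pos hc, mul_one]
    set a := x - u + y with ha
    -- reindex the sum by x' = x - w
    have reidx : (∑ x' : A, g (x - x') * (g (u - (x' + (y + z))))⁻¹ * g z * χ x' (-z))
        = ∑ w : A, g (x - (x - w)) * (g (u - ((x - w) + (y + z))))⁻¹ * g z * χ (x - w) (-z) := by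
      exact Fintype.sum_equiv (Equiv.subLeft x) _ _
        (fun x' => by rw [Equiv.subLeft_apply, show x - (x - x') = x' by abel])
    rw [reidx]
    -- per-term identity
    have termid : ∀ w : A, g (x - (x - w)) * (g (u - ((x - w) + (y + z))))⁻¹ * g z * χ (x - w) (-z)
        = ((χ x z)⁻¹ * g z * (g (a + z))⁻¹) * χ w (-a) := by
      intro w
      rw [show x - (x - w) = w by abel,
          show u - ((x - w) + (y + z)) = w - (a + z) by rw [ha]; abel]
      have c1 : χ (x - w) (-z) = (χ x z)⁻¹ * χ w z := by
        rw [sub_eq_add_neg, hχ_add, hχ_negl, hχ_negr, hχ_negr, inv_inv]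
      have c2 : g (w - (a + z)) = g w * g (a + z) * χ w (a + z) := by
        have h := hχ w (-(a + z))
        rw [hχ_negr, hg_sym, ← sub_eq_add_neg] at h
        field_simp [hgne, hχne] at h
        linear_combination h
      rw [c1, c2, hχ_negr, hχ_addr]
      field_simp [hgne, hχne]
    rw [Finset.sum_congr rfl (fun w _ => termid w), ← Finset.mul_sum, hsum (-a)]
    have hcard : (Fintype.card A : ℂ) ≠ 0 := by
      simp [Fintype.card_ne_zero]
    rw [hD, hδ (y - (y + z) + z), if_pos (show y - (y + z) + z = 0 by abel), mul_one,
      hδ (x - u + y), ← ha]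
    simp only [neg_eq_zero]
    by_cases hA : a = 0
    · rw [if_pos hA, if_pos hA, mul_one, hA, zero_add, hconj _ (hχ_abs x z)]
      field_simp [hgne, hχne, hcard]
    · rw [if_neg hA, if_neg hA]
      simp
  · -- degenerate case: both sides vanish
    have hyvz : y - v + z ≠ 0 := by
      intro h
      apply hc
      have e : v - y + -z = -(y - v + z) := by abel
      rw [e, h, neg_zero]
    simp only [if_neg hc, mul_zero, Finset.sum_const_zero]
    rw [hD, hδ (y - v + z), if_neg hyvz, mul_zero, map_zero]
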